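/- Let L be a full-rank lattice in R^2 with Minkowski reduced basis v1, v2 (so ||v1|| = λ1 and ||v2|| = λ2 are the successive minima of L). Define u1 = λ2·v1 and u2 = λ1·v2. Then the lattice M spanned by u1 and u2 is well-rounded with both successive minima equal to λ1·λ2. -/

import Mathlib

noncomputable section

/-- The planar lattice spanned over ℤ by `v1, v2` in Euclidean plane. -/
def lat (v1 v2 : EuclideanSpace ℝ (Fin 2)) : Set (EuclideanSpace ℝ (Fin 2)) :=
  {x | ∃ m n : ℤ, x = m • v1 + n • v2}

/-- The `i`-th successive minimum of a set `L` in the Euclidean plane. -/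
noncomputable def succMin (L : Set (EuclideanSpace ℝ (Fin 2))) (i : ℕ) : ℝ :=
  sInf {μ : ℝ | 0 ≤ μ ∧ i ≤ Module.finrank ℝ (Submodule.span ℝ {x ∈ L | ‖x‖ ≤ μ})}

namespace WRaux

abbrev E := EuclideanSpace ℝ (Fin 2)

lemma mem_lat (v1 v2 : E) (m n : ℤ) : (m • v1 + n • v2) ∈ lat v1 v2 := ⟨m, n, rfl⟩

lemma range_pair (x y : E) : Set.range ![x, y] = {x, y} := by
  simp [Matrix.range_cons, Matrix.range_empty, Set.pair_comm]

lemma one_le_rank {S : Set E} {x : E} (hx : x ∈ S) (hx0 : x ≠ 0) :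
    1 ≤ Module.finrank ℝ (Submodule.span ℝ S) := by
  have h1 : Submodule.span ℝ {x} ≤ Submodule.span ℝ S :=
    Submodule.span_mono (by simpa using hx)
  have h2 := Submodule.finrank_mono (R := ℝ) h1
  rwa [finrank_span_singleton hx0] at h2

lemma two_le_rank {S : Set E} {x y : E} (hx : x ∈ S) (hy : y ∈ S)
    (h : LinearIndependent ℝ ![x, y]) :
    2 ≤ Module.finrank ℝ (Submodule.span ℝ S) := by
  have h1 : Submodule.span ℝ (Set.range ![x, y]) ≤ Submodule.span ℝ S := by
    apply Submodule.span_mono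
    rw [range_pair]
    rintro z (rfl | rfl) <;> assumption
  have h2 := Submodule.finrank_mono (R := ℝ) h1
  rwa [finrank_span_eq_card h, Fintype.card_fin] at h2

lemma succMin_le {L : Set E} {i : ℕ} {μ : ℝ} (h0 : 0 ≤ μ)
    (h : i ≤ Module.finrank ℝ (Submodule.span ℝ {x ∈ L | ‖x‖ ≤ μ})) :
    succMin L i ≤ μ :=
  csInf_le ⟨0, fun _ hx => hx.1⟩ ⟨h0, h⟩

lemma min1_le {L : Set E} {x : E} (hx : x ∈ L) (hx0 : x ≠ 0) :
    succMin L 1 ≤ ‖x‖ :=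
  succMin_le (norm_nonneg x) (one_le_rank ⟨hx, le_rfl⟩ hx0)

lemma min2_le {L : Set E} {x y : E} (hx : x ∈ L) (hy : y ∈ L)
    (h : LinearIndependent ℝ ![x, y]) :
    succMin L 2 ≤ max ‖x‖ ‖y‖ :=
  succMin_le (le_max_of_le_left (norm_nonneg x))
    (two_le_rank ⟨hx, le_max_left _ _⟩ ⟨hy, le_max_right _ _⟩ h)

lemma min1_le_min2 (L : Set E) {x y : E} (hx : x ∈ L) (hy : y ∈ L)
    (h : LinearIndependent ℝ ![x, y]) :
    succMin L 1 ≤ succMin L 2 := by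
  apply csInf_le_csInf ⟨0, fun _ hμ => hμ.1⟩
  · exact ⟨max ‖x‖ ‖y‖, ⟨le_max_of_le_left (norm_nonneg x),
      two_le_rank ⟨hx, le_max_left _ _⟩ ⟨hy, le_max_right _ _⟩ h⟩⟩
  · rintro μ ⟨h0, hr⟩
    exact ⟨h0, le_trans one_le_two hr⟩

lemma norm_sq_expand (x y : E) (p q : ℝ) :
    ‖p • x + q • y‖ ^ 2 =
      p ^ 2 * ‖x‖ ^ 2 + 2 * p * q * (inner ℝ x y : ℝ) + q ^ 2 * ‖y‖ ^ 2 := by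
  rw [norm_add_sq_real, norm_smul, norm_smul, real_inner_smul_left, real_inner_smul_right,
    mul_pow, mul_pow, Real.norm_eq_abs, Real.norm_eq_abs, sq_abs, sq_abs]
  ring

lemma int_aux {m n : ℤ} (h : ¬(m = 0 ∧ n = 0)) :
    1 ≤ m ^ 2 + n ^ 2 - m * n ∧ 1 ≤ m ^ 2 + n ^ 2 + m * n := by
  have h1 : 1 ≤ m ^ 2 + n ^ 2 := by
    rcases not_and_or.mp h with h' | h'
    · nlinarith [sq_nonneg n, Int.one_le_abs h', sq_abs m]
    · nlinarith [sq_nonneg m, Int.one_le_abs h', sq_abs n]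
  rcases le_or_gt (m * n) 0 with hmn | hmn
  · constructor <;> nlinarith [sq_nonneg (m + n)]
  · have : 1 ≤ m * n := hmn
    constructor <;> nlinarith [sq_nonneg (m - n)]

end WRaux

open WRaux in
theorem stmt_0 (v1 v2 : EuclideanSpace ℝ (Fin 2))
    (hind : LinearIndependent ℝ ![v1, v2])
    (h1 : ‖v1‖ = succMin (lat v1 v2) 1)
    (h2 : ‖v2‖ = succMin (lat v1 v2) 2) :
    succMin (lat (‖v2‖ • v1) (‖v1‖ • v2)) 1 = ‖v1‖ * ‖v2‖ ∧
      succMin (lat (‖v2‖ • v1) (‖v1‖ • v2)) 2 = ‖v1‖ * ‖v2‖ := by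
  have hv1 : v1 ≠ 0 := by have := hind.ne_zero 0; simpa using this
  have hv2 : v2 ≠ 0 := by have := hind.ne_zero 1; simpa using this
  have ha : 0 < ‖v1‖ := norm_pos_iff.mpr hv1
  have hb : 0 < ‖v2‖ := norm_pos_iff.mpr hv2
  have hpair := LinearIndependent.pair_iff.mp hind
  have hv1m : v1 ∈ lat v1 v2 := ⟨1, 0, by simp⟩
  have hv2m : v2 ∈ lat v1 v2 := ⟨0, 1, by simp⟩
  have hab : ‖v1‖ ≤ ‖v2‖ := by
    rw [h1, h2]; exact min1_le_min2 _ hv1m hv2m hind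
  set t : ℝ := inner ℝ v1 v2 with ht
  -- norm of v2 + e•v1 is at least ‖v2‖ for e = ±1
  have hge : ∀ e : ℤ, e = 1 ∨ e = -1 → ‖v2‖ ≤ ‖v2 + (e : ℝ) • v1‖ := by
    intro e he
    set w : EuclideanSpace ℝ (Fin 2) := v2 + (e : ℝ) • v1 with hw
    have hwm : w ∈ lat v1 v2 := by
      refine ⟨e, 1, ?_⟩
      rw [hw, ← Int.cast_smul_eq_zsmul ℝ e v1, ← Int.cast_smul_eq_zsmul ℝ (1:ℤ) v2]
      push_cast
      rw [one_smul, add_comm]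
    have hwind : LinearIndependent ℝ ![v1, w] := by
      rw [LinearIndependent.pair_iff]
      intro s u hsu
      have h0 : (s + u * (e : ℝ)) • v1 + u • v2 = 0 := by
        rw [← hsu, hw]; module
      obtain ⟨hs, hu⟩ := hpair _ _ h0
      subst hu
      constructor
      · simpa using hs
      · rfl
    have hw0 : w ≠ 0 := hwind.ne_zero 1
    by_contra hlt
    push_neg at hlt
    have h2le : succMin (lat v1 v2) 2 ≤ max ‖v1‖ ‖w‖ := min2_le hv1m hwm hwind
    rw [← h2] at h2le
    rcases le_max_iff.mp h2le with hba | hbw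
    · have heq : ‖v1‖ = ‖v2‖ := le_antisymm hab hba
      have := min1_le hwm hw0
      rw [← h1] at this
      linarith
    · linarith
  -- Minkowski-type inequality
  have hsq : ∀ e : ℤ, e = 1 ∨ e = -1 →
      ‖v2‖ ^ 2 ≤ (e:ℝ) ^ 2 * ‖v1‖ ^ 2 + 2 * (e:ℝ) * 1 * t + 1 ^ 2 * ‖v2‖ ^ 2 := by
    intro e he
    have := hge e he
    have hsq := pow_le_pow_left₀ (norm_nonneg v2) this 2
    rw [show v2 + (e:ℝ) • v1 = (e:ℝ) • v1 + (1:ℝ) • v2 by rw [one_smul, add_comm]] at hsq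
    rwa [norm_sq_expand] at hsq
  have ht1 : 2 * t ≤ ‖v1‖ * ‖v2‖ := by
    have := hsq (-1) (Or.inr rfl)
    push_cast at this
    nlinarith [mul_le_mul_of_nonneg_left hab ha.le]
  have ht2 : -(‖v1‖ * ‖v2‖) ≤ 2 * t := by
    have := hsq 1 (Or.inl rfl)
    push_cast at this
    nlinarith [mul_le_mul_of_nonneg_left hab ha.le]
  -- the stretched lattice
  set u1 : EuclideanSpace ℝ (Fin 2) := ‖v2‖ • v1 with hu1
  set u2 : EuclideanSpace ℝ (Fin 2) := ‖v1‖ • v2 with hu2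
  have hindu : LinearIndependent ℝ ![u1, u2] := by
    rw [LinearIndependent.pair_iff]
    intro s u hsu
    rw [hu1, hu2, smul_smul, smul_smul] at hsu
    obtain ⟨hs, hu⟩ := hpair _ _ hsu
    constructor
    · exact (mul_eq_zero.mp hs).resolve_right (ne_of_gt hb)
    · exact (mul_eq_zero.mp hu).resolve_right (ne_of_gt ha)
  have hn1 : ‖u1‖ = ‖v1‖ * ‖v2‖ := by
    rw [hu1, norm_smul, Real.norm_eq_abs, abs_of_nonneg (norm_nonneg v2), mul_comm]
  have hn2 : ‖u2‖ = ‖v1‖ * ‖v2‖ := by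
    rw [hu2, norm_smul, Real.norm_eq_abs, abs_of_nonneg (norm_nonneg v1)]
  have hu1m : u1 ∈ lat u1 u2 := ⟨1, 0, by simp⟩
  have hu2m : u2 ∈ lat u1 u2 := ⟨0, 1, by simp⟩
  have hab0 : 0 ≤ ‖v1‖ * ‖v2‖ := le_of_lt (mul_pos ha hb)
  -- key lower bound on norms of nonzero lattice points
  have hkey : ∀ x ∈ lat u1 u2, x ≠ 0 → ‖v1‖ * ‖v2‖ ≤ ‖x‖ := by
    rintro x ⟨m, n, rfl⟩ hx0
    have hmn : ¬(m = 0 ∧ n = 0) := by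
      rintro ⟨rfl, rfl⟩; simp at hx0
    obtain ⟨hA, hB⟩ := int_aux hmn
    have hA' : (1:ℝ) ≤ (m:ℝ)^2 + (n:ℝ)^2 - (m:ℝ)*(n:ℝ) := by exact_mod_cast hA
    have hB' : (1:ℝ) ≤ (m:ℝ)^2 + (n:ℝ)^2 + (m:ℝ)*(n:ℝ) := by exact_mod_cast hB
    have hxeq : m • u1 + n • u2 = ((m:ℝ) * ‖v2‖) • v1 + ((n:ℝ) * ‖v1‖) • v2 := by
      rw [← Int.cast_smul_eq_zsmul ℝ m u1, ← Int.cast_smul_eq_zsmul ℝ n u2, hu1, hu2,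
        smul_smul, smul_smul]
    have hnsq : ‖m • u1 + n • u2‖ ^ 2 =
        ((m:ℝ) * ‖v2‖) ^ 2 * ‖v1‖ ^ 2 + 2 * ((m:ℝ) * ‖v2‖) * ((n:ℝ) * ‖v1‖) * t
          + ((n:ℝ) * ‖v1‖) ^ 2 * ‖v2‖ ^ 2 := by
      rw [hxeq, norm_sq_expand]
    have hsqle : (‖v1‖ * ‖v2‖) ^ 2 ≤ ‖m • u1 + n • u2‖ ^ 2 := by
      rw [hnsq]
      rcases le_or_gt 0 ((m:ℝ) * (n:ℝ)) with hmn' | hmn'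
      · nlinarith [mul_nonneg (mul_nonneg hmn' hab0)
            (by linarith : (0:ℝ) ≤ 2 * t + ‖v1‖ * ‖v2‖),
          mul_le_mul_of_nonneg_left hA' (sq_nonneg (‖v1‖ * ‖v2‖))]
      · nlinarith [mul_nonneg (mul_nonneg (by linarith : (0:ℝ) ≤ -((m:ℝ) * (n:ℝ))) hab0)
            (by linarith : (0:ℝ) ≤ ‖v1‖ * ‖v2‖ - 2 * t),
          mul_le_mul_of_nonneg_left hB' (sq_nonneg (‖v1‖ * ‖v2‖))]
    exact le_of_pow_le_pow_left₀ two_ne_zero (norm_nonneg _) hsqle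

  have hrank2 : 2 ≤ Module.finrank ℝ
      (Submodule.span ℝ {x ∈ lat u1 u2 | ‖x‖ ≤ ‖v1‖ * ‖v2‖}) :=
    two_le_rank ⟨hu1m, le_of_eq hn1⟩ ⟨hu2m, le_of_eq hn2⟩ hindu
  have hlb : ∀ i : ℕ, 1 ≤ i → i ≤ 2 → ‖v1‖ * ‖v2‖ ≤ succMin (lat u1 u2) i := by
    intro i hi1 hi2
    refine le_csInf ⟨‖v1‖ * ‖v2‖, hab0, le_trans hi2 hrank2⟩ ?_
    rintro μ ⟨h0, hr⟩
    by_contra hlt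
    push_neg at hlt
    have hsub : {x ∈ lat u1 u2 | ‖x‖ ≤ μ} ⊆ ({0} : Set (EuclideanSpace ℝ (Fin 2))) := by
      rintro x ⟨hxm, hxn⟩
      by_contra hx0
      have := hkey x hxm (by simpa using hx0)
      linarith
    have hle : Submodule.span ℝ {x ∈ lat u1 u2 | ‖x‖ ≤ μ} ≤ ⊥ :=
      Submodule.span_le.mpr (by simpa using hsub)
    have h0r := Submodule.finrank_mono (R := ℝ) hle
    rw [finrank_bot] at h0r
    omega
  constructor
  · exact le_antisymm (succMin_le hab0 (le_trans one_le_two hrank2)) (hlb 1 le_rfl one_le_two)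
  · exact le_antisymm (succMin_le hab0 hrank2) (hlb 2 one_le_two le_rfl)
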